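/- Let π be a non-optimal policy and let π' be the policy obtained from π by one step of Simplex-PI (π' agrees with π everywhere except at a state i* maximizing the advantage a_π(i) over all states i, where π'(i*) achieves T v_π(i*)). Then 1ᵀ(v_* − v_{π'}) ≤ (1 − (1−γ)/n) · 1ᵀ(v_* − v_π). In particular, the sequence (1ᵀ(v_* − v_{π_k}))_{k≥0} built by Simplex-PI is contracting with coefficient 1 − (1−γ)/n. -/
import Mathlib


open Matrix BigOperators

/-- A finite discounted MDP with `n ≥ 1` states and `m ≥ 2` actions:
transition probabilities `p i a j`, rewards `r i a j`, discount factor `γ ∈ (0,1)`. -/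
structure MDP (n m : ℕ) : Type where
  n_pos : 1 ≤ n
  m_ge_two : 2 ≤ m
  p : Fin n → Fin m → Fin n → ℝ
  r : Fin n → Fin m → Fin n → ℝ
  γ : ℝ
  p_nonneg : ∀ i a j, 0 ≤ p i a j
  p_sum : ∀ i a, ∑ j, p i a j = 1
  γ_pos : 0 < γ
  γ_lt_one : γ < 1

/-- A (stationary deterministic) policy. -/
abbrev MDP.Policy (n m : ℕ) : Type := Fin n → Fin m

namespace MDP

variable {n m : ℕ}

/-- The row-stochastic transition matrix `P_π` of a policy. -/
def P (M : MDP n m) (π : Policy n m) : Matrix (Fin n) (Fin n) ℝ :=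
  Matrix.of fun i j => M.p i (π i) j

/-- The expected reward vector `r_π` of a policy. -/
def rPol (M : MDP n m) (π : Policy n m) : Fin n → ℝ :=
  fun i => ∑ j, M.p i (π i) j * M.r i (π i) j

/-- The Bellman operator `T_π v = r_π + γ P_π v` of a policy. -/
def Tpol (M : MDP n m) (π : Policy n m) (v : Fin n → ℝ) : Fin n → ℝ :=
  fun i => M.rPol π i + M.γ * (M.P π *ᵥ v) i

/-- `IsValue M V` asserts that, for every policy `π`, `V π` is the value function `v_π`,
i.e. the (unique) solution of the Bellman equation `v_π = T_π v_π`. -/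
def IsValue (M : MDP n m) (V : Policy n m → Fin n → ℝ) : Prop :=
  ∀ π, V π = M.Tpol π (V π)

/-- The optimal Bellman operator `T v = max_π T_π v` (componentwise maximum). -/
noncomputable def T (M : MDP n m) (v : Fin n → ℝ) : Fin n → ℝ :=
  fun i => ⨆ π : Policy n m, M.Tpol π v i

/-- The optimal value function `v_*`, the componentwise maximum of `v_π` over policies. -/
noncomputable def vStar (M : MDP n m) (V : Policy n m → Fin n → ℝ) : Fin n → ℝ :=
  fun i => ⨆ π : Policy n m, V π i

/-- A policy is optimal when its value equals `v_*`. -/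
def IsOptimal (M : MDP n m) (V : Policy n m → Fin n → ℝ) (π : Policy n m) : Prop :=
  V π = M.vStar V

/-- `π'` is greedy with respect to `v_π`: `T_{π'} v_π = T v_π`.  One step of Howard's PI
from a non-optimal `π` moves to such a `π'`. -/
def Greedy (M : MDP n m) (V : Policy n m → Fin n → ℝ) (π π' : Policy n m) : Prop :=
  M.Tpol π' (V π) = M.T (V π)

/-- One step of Simplex-PI: `π'` agrees with `π` except at a single state `s` maximizing
the advantage `a_π(i) = (T v_π - v_π)(i)`, where `π'(s)` achieves `T v_π(s)`. -/
def SimplexStep (M : MDP n m) (V : Policy n m → Fin n → ℝ) (π π' : Policy n m) : Prop :=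
  ∃ s : Fin n, (∀ i, i ≠ s → π' i = π i) ∧
    (∀ i, M.T (V π) i - V π i ≤ M.T (V π) s - V π s) ∧
    M.Tpol π' (V π) s = M.T (V π) s

/-- The vector `x_π = (I - γ P_πᵀ)⁻¹ 1`. -/
noncomputable def xPol (M : MDP n m) (π : Policy n m) : Fin n → ℝ :=
  ((1 : Matrix (Fin n) (Fin n) ℝ) - M.γ • (M.P π)ᵀ)⁻¹ *ᵥ (fun _ => (1 : ℝ))

/-- `R` is a recurrent class of `π`: nonempty, closed under positive-probability
transitions of `P_π`, and every state of `R` is reachable from every other state of `R`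
along positive-probability transitions.  (For a deterministic MDP this is the notion of
a cycle of `π`.) -/
def IsRecClass (M : MDP n m) (π : Policy n m) (R : Set (Fin n)) : Prop :=
  R.Nonempty ∧ (∀ i ∈ R, ∀ j, 0 < M.P π i j → j ∈ R) ∧
    ∀ i ∈ R, ∀ j ∈ R, Relation.ReflTransGen (fun a b => 0 < M.P π a b) i j

/-- A state is recurrent for `π` if it belongs to some recurrent class of `π`. -/
def Recurrent (M : MDP n m) (π : Policy n m) (i : Fin n) : Prop :=
  ∃ R : Set (Fin n), M.IsRecClass π R ∧ i ∈ R

/-- A state is transient for `π` if it is not recurrent for `π`. -/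
def Transient (M : MDP n m) (π : Policy n m) (i : Fin n) : Prop :=
  ¬ M.Recurrent π i

/-- Assumption 1: `τ_t, τ_r ≥ 1` with `x_π(i) ≤ τ_t` for transient states and
`x_π(i) ≥ n / ((1-γ) τ_r)` for recurrent states, for every policy `π`. -/
def Ass1 (M : MDP n m) (τt τr : ℝ) : Prop :=
  1 ≤ τt ∧ 1 ≤ τr ∧
    (∀ π i, M.Transient π i → M.xPol π i ≤ τt) ∧
    (∀ π i, M.Recurrent π i → (n : ℝ) / ((1 - M.γ) * τr) ≤ M.xPol π i)

/-- Assumption 2: the state space is partitioned into a set of states transient for every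
policy and a set of states recurrent for every policy. -/
def Ass2 (M : MDP n m) : Prop :=
  ∃ 𝒯 ℛ : Set (Fin n), 𝒯 ∪ ℛ = Set.univ ∧ 𝒯 ∩ ℛ = ∅ ∧
    ∀ π : Policy n m, (∀ i ∈ 𝒯, M.Transient π i) ∧ (∀ i ∈ ℛ, M.Recurrent π i)

/-- The MDP is deterministic when every transition probability is 0 or 1. -/
def Deterministic (M : MDP n m) : Prop :=
  ∀ i a j, M.p i a j = 0 ∨ M.p i a j = 1

/-- `V_max = (max_π ‖r_π‖_∞) / (1 - γ)`. -/
noncomputable def Vmax (M : MDP n m) : ℝ :=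
  (⨆ π : Policy n m, ‖M.rPol π‖) / (1 - M.γ)



lemma mulVec_apply' (M : MDP n m) (σ : Policy n m) (d : Fin n → ℝ) (i : Fin n) :
    (M.P σ *ᵥ d) i = ∑ j, M.p i (σ i) j * d j := by
  simp [Matrix.mulVec, dotProduct, MDP.P]

lemma mulVec_ge' (M : MDP n m) (σ : Policy n m) (d : Fin n → ℝ) (μ : ℝ)
    (hd : ∀ j, μ ≤ d j) (i : Fin n) : μ ≤ (M.P σ *ᵥ d) i := by
  rw [M.mulVec_apply']
  calc μ = ∑ j, M.p i (σ i) j * μ := by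
        rw [← Finset.sum_mul, M.p_sum, one_mul]
    _ ≤ _ := Finset.sum_le_sum fun j _ =>
        mul_le_mul_of_nonneg_left (hd j) (M.p_nonneg i (σ i) j)

lemma mulVec_le' (M : MDP n m) (σ : Policy n m) (d : Fin n → ℝ) (μ : ℝ)
    (hd : ∀ j, d j ≤ μ) (i : Fin n) : (M.P σ *ᵥ d) i ≤ μ := by
  rw [M.mulVec_apply']
  calc ∑ j, M.p i (σ i) j * d j
      ≤ ∑ j, M.p i (σ i) j * μ := Finset.sum_le_sum fun j _ =>
        mul_le_mul_of_nonneg_left (hd j) (M.p_nonneg i (σ i) j)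
    _ = μ := by rw [← Finset.sum_mul, M.p_sum, one_mul]

/-- Comparison lemma: if `d = g + γ P d` with `g ≥ 0`, then `d ≥ g`. -/
lemma comp_ge (M : MDP n m) (σ : Policy n m) (d g : Fin n → ℝ)
    (h : ∀ i, d i = g i + M.γ * (M.P σ *ᵥ d) i) (hg : ∀ i, 0 ≤ g i) (i : Fin n) :
    g i ≤ d i := by
  obtain ⟨i0, -, hi0⟩ := Finset.exists_min_image Finset.univ d ⟨i, Finset.mem_univ i⟩
  have hmin : ∀ j, d i0 ≤ d j := fun j => hi0 j (Finset.mem_univ j)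
  have hP0 : d i0 ≤ (M.P σ *ᵥ d) i0 := M.mulVec_ge' σ d (d i0) hmin i0
  have hγ := M.γ_pos
  have hγ1 := M.γ_lt_one
  have h1 : M.γ * d i0 ≤ M.γ * (M.P σ *ᵥ d) i0 :=
    mul_le_mul_of_nonneg_left hP0 hγ.le
  have hd0 : 0 ≤ d i0 := by nlinarith [h i0, hg i0]
  have hdnn : ∀ j, 0 ≤ d j := fun j => le_trans hd0 (hmin j)
  have h2 : (0:ℝ) ≤ (M.P σ *ᵥ d) i := M.mulVec_ge' σ d 0 hdnn i
  nlinarith [h i]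

/-- Comparison lemma: if `d = g + γ P d` with `g ≤ A`, then `(1-γ) d ≤ A`. -/
lemma comp_le (M : MDP n m) (σ : Policy n m) (d g : Fin n → ℝ) (A : ℝ)
    (h : ∀ i, d i = g i + M.γ * (M.P σ *ᵥ d) i) (hg : ∀ i, g i ≤ A) (i : Fin n) :
    (1 - M.γ) * d i ≤ A := by
  obtain ⟨i0, -, hi0⟩ := Finset.exists_max_image Finset.univ d ⟨i, Finset.mem_univ i⟩
  have hmax : ∀ j, d j ≤ d i0 := fun j => hi0 j (Finset.mem_univ j)
  have hP0 : (M.P σ *ᵥ d) i0 ≤ d i0 := M.mulVec_le' σ d (d i0) hmax i0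
  have hγ := M.γ_pos
  have hγ1 := M.γ_lt_one
  have h1 : M.γ * (M.P σ *ᵥ d) i0 ≤ M.γ * d i0 :=
    mul_le_mul_of_nonneg_left hP0 hγ.le
  have h0 : (1 - M.γ) * d i0 ≤ A := by nlinarith [h i0, hg i0]
  have h2 : (1 - M.γ) * d i ≤ (1 - M.γ) * d i0 :=
    mul_le_mul_of_nonneg_left (hmax i) (by linarith)
  linarith

/-- Bellman difference identity. -/
lemma value_diff (M : MDP n m) (V : Policy n m → Fin n → ℝ) (hV : M.IsValue V)
    (π σ : Policy n m) (i : Fin n) :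
    V σ i - V π i = (M.Tpol σ (V π) i - V π i)
      + M.γ * (M.P σ *ᵥ (fun j => V σ j - V π j)) i := by
  have h1 := congrFun (hV σ) i
  have h2 : (M.P σ *ᵥ (fun j => V σ j - V π j)) i
      = (M.P σ *ᵥ V σ) i - (M.P σ *ᵥ V π) i := by
    simp [mulVec_apply', mul_sub, Finset.sum_sub_distrib]
  simp only [Tpol] at h1 ⊢
  rw [h2]; linarith

lemma Tpol_congr (M : MDP n m) (σ σ' : Policy n m) (v : Fin n → ℝ) (i : Fin n)
    (h : σ i = σ' i) : M.Tpol σ v i = M.Tpol σ' v i := by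
  simp [Tpol, rPol, mulVec_apply', h]

end MDP

/-- one step of Simplex-PI contracts `1ᵀ(v_* - v_π)` with coefficient
`1 - (1-γ)/n`. -/
theorem simplex_contraction {n m : ℕ} (M : MDP n m)
    (V : MDP.Policy n m → Fin n → ℝ) (hV : M.IsValue V)
    (π π' : MDP.Policy n m) (hπ : ¬ M.IsOptimal V π)
    (hstep : M.SimplexStep V π π') :
    ∑ i, (M.vStar V i - V π' i) ≤
      (1 - (1 - M.γ) / (n : ℝ)) * ∑ i, (M.vStar V i - V π i) := by
  classical
  have hnpos : 0 < n := M.n_pos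
  haveI : Nonempty (Fin m) := ⟨⟨0, by have := M.m_ge_two; omega⟩⟩
  have hγ := M.γ_pos
  have hγ1 := M.γ_lt_one
  obtain ⟨s, hagree, hmax, hTs⟩ := hstep
  set v : Fin n → ℝ := V π with hv
  have hbddT : ∀ i : Fin n, BddAbove (Set.range fun σ : MDP.Policy n m => M.Tpol σ v i) :=
    fun i => Set.Finite.bddAbove (Set.finite_range _)
  have hT_ge : ∀ (σ : MDP.Policy n m) (i : Fin n), M.Tpol σ v i ≤ M.T v i :=
    fun σ i => le_ciSup (hbddT i) σ
  have hTπ : ∀ i, M.Tpol π v i = v i := fun i => (congrFun (hV π) i).symm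
  have ha_nonneg : ∀ i, 0 ≤ M.T v i - v i := fun i => by
    have := hT_ge π i; rw [hTπ i] at this; linarith
  set A : ℝ := M.T v s - v s with hA
  set g : Fin n → ℝ := fun i => M.Tpol π' v i - v i with hg
  have hgs : g s = A := by simp [hg, hA, hTs]
  have hgi : ∀ i, i ≠ s → g i = 0 := fun i hi => by
    have h1 := M.Tpol_congr π' π v i (hagree i hi)
    simp [hg, h1, hTπ i]
  have hg_nonneg : ∀ i, 0 ≤ g i := fun i => by
    by_cases hi : i = s
    · rw [hi, hgs]; exact ha_nonneg s
    · rw [hgi i hi]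
  have hrec' : ∀ i, (fun j => V π' j - v j) i
      = g i + M.γ * (M.P π' *ᵥ (fun j => V π' j - v j)) i :=
    fun i => M.value_diff V hV π π' i
  have hd_ge : ∀ i, g i ≤ V π' i - v i :=
    fun i => M.comp_ge π' (fun j => V π' j - v j) g hrec' hg_nonneg i
  have hsum_ge : A ≤ ∑ i, (V π' i - v i) := by
    calc A = g s := hgs.symm
      _ ≤ ∑ i, g i := Finset.single_le_sum (fun i _ => hg_nonneg i) (Finset.mem_univ s)
      _ ≤ ∑ i, (V π' i - v i) := Finset.sum_le_sum fun i _ => hd_ge i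
  have hstar_le : ∀ i, (1 - M.γ) * (M.vStar V i - v i) ≤ A := by
    intro i
    have hub : ∀ σ : MDP.Policy n m, V σ i ≤ v i + A / (1 - M.γ) := by
      intro σ
      have hgσ : ∀ j, M.Tpol σ v j - v j ≤ A := fun j =>
        le_trans (by have := hT_ge σ j; linarith) (hmax j)
      have := M.comp_le σ (fun j => V σ j - v j) (fun j => M.Tpol σ v j - v j) A
        (fun j => M.value_diff V hV π σ j) hgσ i
      have h2 : V σ i - v i ≤ A / (1 - M.γ) := by
        rw [le_div_iff₀ (by linarith : (0:ℝ) < 1 - M.γ)]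
        nlinarith
      linarith
    have hvs : M.vStar V i ≤ v i + A / (1 - M.γ) := ciSup_le hub
    have h3 : (1 - M.γ) * (M.vStar V i - v i) ≤ (1 - M.γ) * (A / (1 - M.γ)) :=
      mul_le_mul_of_nonneg_left (by linarith) (by linarith)
    rwa [mul_div_cancel₀ A (by linarith : (1:ℝ) - M.γ ≠ 0)] at h3
  set Δ : ℝ := ∑ i, (M.vStar V i - v i) with hΔ
  have hΔA : (1 - M.γ) * Δ ≤ (n : ℝ) * A := by
    calc (1 - M.γ) * Δ = ∑ i, (1 - M.γ) * (M.vStar V i - v i) := by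
          rw [hΔ, Finset.mul_sum]
      _ ≤ ∑ _i : Fin n, A := Finset.sum_le_sum fun i _ => hstar_le i
      _ = (n : ℝ) * A := by simp [mul_comm]
  have hNpos : (0:ℝ) < (n : ℝ) := by exact_mod_cast hnpos
  have hkey : (1 - M.γ) / (n : ℝ) * Δ ≤ A := by
    rw [div_mul_eq_mul_div, div_le_iff₀ hNpos]
    nlinarith
  have hsplit : ∑ i, (M.vStar V i - V π' i) = Δ - ∑ i, (V π' i - v i) := by
    rw [hΔ, ← Finset.sum_sub_distrib]
    exact Finset.sum_congr rfl fun i _ => by ring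
  have hrhs : (1 - (1 - M.γ) / (n : ℝ)) * Δ = Δ - (1 - M.γ) / (n : ℝ) * Δ := by ring
  rw [hsplit, hrhs]
  linarith
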